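/- Let B be a separable Frobenius algebra over k with separability idempotent p = Σ p⁽¹⁾ ⊗ p⁽²⁾ and counit δ. Then B ⊗ B^op is a weak Hopf algebra with: the tensor product algebra structure (multiplication (a⊗b)(a'⊗b') = aa' ⊗ b'b), comultiplication Δ(a ⊗ b) = Σ (a ⊗ p⁽¹⁾) ⊗ (p⁽²⁾ ⊗ b), counit ε(a ⊗ b) = δ(ab), and antipode S(a ⊗ b) = b ⊗ τ(a), where τ(a) = Σ δ(a·p⁽²⁾)·p⁽¹⁾ is the Nakayama automorphism of B. -/

import Mathlib

open TensorProduct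

noncomputable section

variable (k A : Type*) [Field k] [AddCommGroup A] [Module k A]

/-- The linearization `A ⊗ A →ₗ A` of a bilinear multiplication. -/
def m2 (mul : A →ₗ[k] A →ₗ[k] A) : A ⊗[k] A →ₗ[k] A := TensorProduct.lift mul

/-- Componentwise multiplication on `A ⊗ A` induced by a bilinear multiplication on `A`. -/
def mulT (mul : A →ₗ[k] A →ₗ[k] A) :
    (A ⊗[k] A) →ₗ[k] (A ⊗[k] A) →ₗ[k] (A ⊗[k] A) :=
  TensorProduct.curry ((TensorProduct.map (m2 k A mul) (m2 k A mul)) ∘ₗ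
    (TensorProduct.tensorTensorTensorComm k A A A A).toLinearMap)

/-- Componentwise multiplication on `A ⊗ (A ⊗ A)`. -/
def mulT3 (mul : A →ₗ[k] A →ₗ[k] A) :
    (A ⊗[k] (A ⊗[k] A)) →ₗ[k] (A ⊗[k] (A ⊗[k] A)) →ₗ[k] (A ⊗[k] (A ⊗[k] A)) :=
  TensorProduct.curry
    ((TensorProduct.map (m2 k A mul) (TensorProduct.lift (mulT k A mul))) ∘ₗ
      (TensorProduct.tensorTensorTensorComm k A (A ⊗[k] A) A (A ⊗[k] A)).toLinearMap)

/-- The full set of axioms of a weak Hopf algebra over `k` on a vector space `A`, for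
explicitly given structure maps: an associative unital multiplication, a coassociative
counital comultiplication, the three weak bialgebra axioms, and the three antipode
axioms `Σ x₍₁₎S(x₍₂₎) = Σ ε(1₍₁₎x)1₍₂₎`, `Σ S(x₍₁₎)x₍₂₎ = Σ 1₍₁₎ε(x1₍₂₎)`,
`Σ S(x₍₁₎)x₍₂₎S(x₍₃₎) = S(x)`. -/
structure IsWeakHopf (mul : A →ₗ[k] A →ₗ[k] A) (one : A)
    (comul : A →ₗ[k] A ⊗[k] A) (counit : A →ₗ[k] k) (S : A →ₗ[k] A) : Prop where
  mul_assoc' : ∀ x y z : A, mul (mul x y) z = mul x (mul y z)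
  one_mul' : ∀ x : A, mul one x = x
  mul_one' : ∀ x : A, mul x one = x
  coassoc' : (TensorProduct.assoc k A A A).toLinearMap ∘ₗ comul.rTensor A ∘ₗ comul
      = LinearMap.lTensor A comul ∘ₗ comul
  counit_comul' : ∀ x : A, (TensorProduct.lid k A) ((counit.rTensor A) (comul x)) = x
  comul_counit' : ∀ x : A, (TensorProduct.rid k A) ((LinearMap.lTensor A counit) (comul x)) = x
  comul_mul : ∀ x y : A, comul (mul x y) = mulT k A mul (comul x) (comul y)
  weak_counit₁ : ∀ x y z : A, LinearMap.mul' k k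
      ((TensorProduct.map (counit ∘ₗ mul x) (counit ∘ₗ mul.flip z)) (comul y))
      = counit (mul (mul x y) z)
  weak_counit₂ : ∀ x y z : A, LinearMap.mul' k k
      ((TensorProduct.map (counit ∘ₗ mul.flip z) (counit ∘ₗ mul x)) (comul y))
      = counit (mul (mul x y) z)
  weak_unit₁ : mulT3 k A mul
      ((TensorProduct.map LinearMap.id ((TensorProduct.mk k A A).flip one)) (comul one))
      ((TensorProduct.mk k A (A ⊗[k] A) one) (comul one))
      = (LinearMap.lTensor A comul) (comul one)
  weak_unit₂ : mulT3 k A mul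
      ((TensorProduct.mk k A (A ⊗[k] A) one) (comul one))
      ((TensorProduct.map LinearMap.id ((TensorProduct.mk k A A).flip one)) (comul one))
      = (LinearMap.lTensor A comul) (comul one)
  antipode₁ : ∀ x : A, m2 k A mul ((LinearMap.lTensor A S) (comul x))
      = (TensorProduct.lid k A)
          ((TensorProduct.map (counit ∘ₗ mul.flip x) LinearMap.id) (comul one))
  antipode₂ : ∀ x : A, m2 k A mul ((S.rTensor A) (comul x))
      = (TensorProduct.rid k A)
          ((TensorProduct.map LinearMap.id (counit ∘ₗ mul x)) (comul one))
  antipode₃ : ∀ x : A, m2 k A mul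
      ((TensorProduct.map S (m2 k A mul ∘ₗ LinearMap.lTensor A S))
        ((LinearMap.lTensor A comul) (comul x))) = S x


theorem m2_tmul (mul : A →ₗ[k] A →ₗ[k] A) (x y : A) :
    m2 k A mul (x ⊗ₜ[k] y) = mul x y := rfl

theorem mulT_tmul (mul : A →ₗ[k] A →ₗ[k] A) (x y x' y' : A) :
    mulT k A mul (x ⊗ₜ[k] y) (x' ⊗ₜ[k] y') = mul x x' ⊗ₜ[k] mul y y' := by
  simp [mulT, m2, TensorProduct.curry_apply, TensorProduct.tensorTensorTensorComm_tmul]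

theorem mulT3_tmul (mul : A →ₗ[k] A →ₗ[k] A) (x x' : A) (y y' : A ⊗[k] A) :
    mulT3 k A mul (x ⊗ₜ[k] y) (x' ⊗ₜ[k] y') = mul x x' ⊗ₜ[k] mulT k A mul y y' := by
  simp [mulT3, m2, TensorProduct.curry_apply, TensorProduct.tensorTensorTensorComm_tmul]

end

noncomputable section

open MulOpposite

variable (k : Type*) [Field k] (B : Type*) [Ring B] [Algebra k B]

/-- The element `Σ (1 ⊗ op p⁽¹⁾) ⊗ (p⁽²⁾ ⊗ op 1)` of `(B ⊗ Bᵐᵒᵖ) ⊗ (B ⊗ Bᵐᵒᵖ)`. -/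
def sepE (s : B →ₗ[k] B ⊗[k] B) : (B ⊗[k] Bᵐᵒᵖ) ⊗[k] (B ⊗[k] Bᵐᵒᵖ) :=
  (TensorProduct.map
    ((TensorProduct.mk k B Bᵐᵒᵖ 1) ∘ₗ (opLinearEquiv k (M := B)).toLinearMap)
    ((TensorProduct.mk k B Bᵐᵒᵖ).flip (op 1))) (s 1)

/-- The comultiplication `Δ(a ⊗ b) = Σ (a ⊗ p⁽¹⁾) ⊗ (p⁽²⁾ ⊗ b)` on `B ⊗ Bᵐᵒᵖ`. -/
def bopComul (s : B →ₗ[k] B ⊗[k] B) :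
    B ⊗[k] Bᵐᵒᵖ →ₗ[k] (B ⊗[k] Bᵐᵒᵖ) ⊗[k] (B ⊗[k] Bᵐᵒᵖ) :=
  LinearMap.mulRight k (sepE k B s) ∘ₗ
    TensorProduct.map
      ((TensorProduct.mk k B Bᵐᵒᵖ).flip (op 1))
      (TensorProduct.mk k B Bᵐᵒᵖ 1)

/-- The counit `ε(a ⊗ b) = δ(ab)` on `B ⊗ Bᵐᵒᵖ`. -/
def bopCounit (δ : B →ₗ[k] k) : B ⊗[k] Bᵐᵒᵖ →ₗ[k] k :=
  δ ∘ₗ LinearMap.mul' k B ∘ₗ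
    TensorProduct.map LinearMap.id (opLinearEquiv k (M := B)).symm.toLinearMap

/-- The Nakayama automorphism `τ(a) = Σ δ(a p⁽²⁾) p⁽¹⁾` of `B`. -/
def nakayama (s : B →ₗ[k] B ⊗[k] B) (δ : B →ₗ[k] k) : B →ₗ[k] B :=
  (TensorProduct.rid k B).toLinearMap ∘ₗ TensorProduct.map LinearMap.id δ
    ∘ₗ LinearMap.mulRight k (s 1) ∘ₗ TensorProduct.mk k B B 1

/-- The antipode `S(a ⊗ b) = b ⊗ τ(a)` on `B ⊗ Bᵐᵒᵖ`. -/
def bopAntipode (s : B →ₗ[k] B ⊗[k] B) (δ : B →ₗ[k] k) :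
    B ⊗[k] Bᵐᵒᵖ →ₗ[k] B ⊗[k] Bᵐᵒᵖ :=
  (TensorProduct.comm k Bᵐᵒᵖ B).toLinearMap ∘ₗ
    TensorProduct.map
      ((opLinearEquiv k (M := B)).toLinearMap ∘ₗ nakayama k B s δ)
      (opLinearEquiv k (M := B)).symm.toLinearMap

set_option maxHeartbeats 2000000 in
set_option synthInstance.maxHeartbeats 500000 in
/-- For a separable Frobenius algebra `B` over `k` with separability
idempotent `p = s 1` and counit `δ`, the algebra `B ⊗ Bᵐᵒᵖ` with comultiplication
`Δ(a ⊗ b) = Σ (a ⊗ p⁽¹⁾) ⊗ (p⁽²⁾ ⊗ b)`, counit `ε(a ⊗ b) = δ(ab)` and antipode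
`S(a ⊗ b) = b ⊗ τ(a)` (with `τ` the Nakayama automorphism) is a weak Hopf algebra. -/
theorem bop_isWeakHopf
    (s : B →ₗ[k] B ⊗[k] B) (δ : B →ₗ[k] k)
    (hcoassoc : (TensorProduct.assoc k B B B).toLinearMap ∘ₗ s.rTensor B ∘ₗ s
      = LinearMap.lTensor B s ∘ₗ s)
    (hcounitl : ∀ x : B, (TensorProduct.lid k B) ((δ.rTensor B) (s x)) = x)
    (hcounitr : ∀ x : B, (TensorProduct.rid k B) ((LinearMap.lTensor B δ) (s x)) = x)
    (hbim : ∀ x y : B, s x * ((1 : B) ⊗ₜ[k] y) = s (x * y) ∧ s (x * y) = (x ⊗ₜ[k] (1 : B)) * s y)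
    (hsep : ∀ x : B, LinearMap.mul' k B (s x) = x) :
    IsWeakHopf k (B ⊗[k] Bᵐᵒᵖ) (LinearMap.mul k (B ⊗[k] Bᵐᵒᵖ)) 1
      (bopComul k B s) (bopCounit k B δ) (bopAntipode k B s δ) := by
  classical
  obtain ⟨T, hT⟩ := TensorProduct.exists_finset (s 1)
  -- s x = (x ⊗ 1) * p
  have hs_left : ∀ x : B, s x = ∑ i ∈ T, (x * i.1) ⊗ₜ[k] i.2 := by
    intro x
    have h := (hbim x 1).2
    rw [mul_one] at h
    rw [h, hT, Finset.mul_sum]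
    simp [Algebra.TensorProduct.tmul_mul_tmul]
  -- s x = p * (1 ⊗ x)
  have hs_right : ∀ x : B, s x = ∑ i ∈ T, i.1 ⊗ₜ[k] (i.2 * x) := by
    intro x
    have h := (hbim 1 x).1
    rw [one_mul] at h
    rw [← h, hT, Finset.sum_mul]
    simp [Algebra.TensorProduct.tmul_mul_tmul]
  -- the Casimir property
  have hC : ∀ x : B, ∑ i ∈ T, i.1 ⊗ₜ[k] (i.2 * x) = ∑ i ∈ T, (x * i.1) ⊗ₜ[k] i.2 := by
    intro x; rw [← hs_right, ← hs_left]
  have hI : ∀ x : B, ∑ i ∈ T, δ (x * i.1) • i.2 = x := by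
    intro x
    have h := hcounitl x
    rw [hs_left x] at h
    simpa [map_sum] using h
  have hIII : ∀ x : B, ∑ i ∈ T, δ (i.2 * x) • i.1 = x := by
    intro x
    have h := hcounitr x
    rw [hs_right x] at h
    simpa [map_sum] using h
  have hM : ∑ i ∈ T, i.1 * i.2 = 1 := by
    have h := hsep 1
    rw [hT] at h
    simpa [map_sum, LinearMap.mul'_apply] using h
  -- formula for the comultiplication on pure tensors
  have hΔ : ∀ (a : B) (b : Bᵐᵒᵖ), bopComul k B s (a ⊗ₜ[k] b)
      = ∑ i ∈ T, (a ⊗ₜ[k] MulOpposite.op i.1) ⊗ₜ[k] (i.2 ⊗ₜ[k] b) := by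
    intro a b
    simp only [bopComul, sepE, hT, map_sum, LinearMap.comp_apply,
      TensorProduct.map_tmul, TensorProduct.mk_apply, LinearMap.flip_apply,
      LinearMap.mulRight_apply, MulOpposite.coe_opLinearEquiv_toLinearMap,
      LinearMap.id_apply]
    rw [Finset.mul_sum T (fun i => (((1:B) ⊗ₜ[k] MulOpposite.op i.1) ⊗ₜ[k] (i.2 ⊗ₜ[k] MulOpposite.op (1:B))))
      ((a ⊗ₜ[k] MulOpposite.op (1:B)) ⊗ₜ[k] ((1:B) ⊗ₜ[k] b))]
    refine Finset.sum_congr rfl fun i _ => ?_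
    simp [Algebra.TensorProduct.tmul_mul_tmul]
  -- formula for the counit on pure tensors
  have hε : ∀ (a : B) (b : Bᵐᵒᵖ), bopCounit k B δ (a ⊗ₜ[k] b) = δ (a * MulOpposite.unop b) := by
    intro a b
    simp [bopCounit, LinearMap.mul'_apply]
  -- formula for the Nakayama automorphism
  have hτ : ∀ a : B, nakayama k B s δ a = ∑ i ∈ T, δ (a * i.2) • i.1 := by
    intro a
    simp only [nakayama, LinearMap.comp_apply, TensorProduct.mk_apply,
      LinearMap.mulRight_apply, hT, Finset.mul_sum, map_sum]
    refine Finset.sum_congr rfl fun i _ => ?_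
    simp [Algebra.TensorProduct.tmul_mul_tmul, TensorProduct.rid_tmul]
  -- formula for the antipode on pure tensors
  have hS : ∀ (a : B) (b : Bᵐᵒᵖ), bopAntipode k B s δ (a ⊗ₜ[k] b)
      = MulOpposite.unop b ⊗ₜ[k] MulOpposite.op (nakayama k B s δ a) := by
    intro a b
    simp [bopAntipode]
  -- the key Casimir consequences
  have hKey1 : ∑ j ∈ T, ∑ i ∈ T, (j.1 * i.1) ⊗ₜ[k] (i.2 * j.2)
      = ∑ i ∈ T, i.1 ⊗ₜ[k] i.2 := by
    have step : ∀ j : B × B, ∑ i ∈ T, (j.1 * i.1) ⊗ₜ[k] (i.2 * j.2)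
        = ∑ i ∈ T, (j.1 * j.2 * i.1) ⊗ₜ[k] i.2 := by
      intro j
      have h := congrArg
        (TensorProduct.map (LinearMap.mulLeft k j.1) (LinearMap.id : B →ₗ[k] B)) (hC j.2)
      simp only [map_sum, TensorProduct.map_tmul, LinearMap.mulLeft_apply,
        LinearMap.id_apply] at h
      rw [h]
      exact Finset.sum_congr rfl fun i _ => by rw [mul_assoc]
    calc ∑ j ∈ T, ∑ i ∈ T, (j.1 * i.1) ⊗ₜ[k] (i.2 * j.2)
        = ∑ j ∈ T, ∑ i ∈ T, (j.1 * j.2 * i.1) ⊗ₜ[k] i.2 :=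
          Finset.sum_congr rfl fun j _ => step j
      _ = ∑ i ∈ T, ((∑ j ∈ T, j.1 * j.2) * i.1) ⊗ₜ[k] i.2 := by
          rw [Finset.sum_comm]
          refine Finset.sum_congr rfl fun i _ => ?_
          rw [← TensorProduct.sum_tmul, ← Finset.sum_mul]
      _ = ∑ i ∈ T, i.1 ⊗ₜ[k] i.2 := by rw [hM]; simp
  have hKey2 : ∑ i ∈ T, nakayama k B s δ i.2 * i.1 = 1 := by
    have hterm : ∀ j ∈ T, ∑ i ∈ T, δ (i.2 * j.2) • (j.1 * i.1) = j.1 * j.2 := by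
      intro j _
      rw [show ∑ i ∈ T, δ (i.2 * j.2) • (j.1 * i.1)
          = j.1 * ∑ i ∈ T, δ (i.2 * j.2) • i.1 by
        rw [Finset.mul_sum]
        exact Finset.sum_congr rfl fun i _ => (mul_smul_comm _ _ _).symm]
      rw [hIII]
    calc ∑ i ∈ T, nakayama k B s δ i.2 * i.1
        = ∑ i ∈ T, ∑ j ∈ T, δ (i.2 * j.2) • (j.1 * i.1) := by
          refine Finset.sum_congr rfl fun i _ => ?_
          rw [hτ, Finset.sum_mul]
          exact Finset.sum_congr rfl fun j _ => smul_mul_assoc _ _ _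
      _ = ∑ j ∈ T, ∑ i ∈ T, δ (i.2 * j.2) • (j.1 * i.1) := Finset.sum_comm
      _ = ∑ j ∈ T, j.1 * j.2 := Finset.sum_congr rfl hterm
      _ = 1 := hM
  have hKey3 : ∀ a x : B, ∑ i ∈ T, δ (a * (i.2 * x)) • i.1
      = x * nakayama k B s δ a := by
    intro a x
    have h := congrArg ((TensorProduct.rid k B).toLinearMap ∘ₗ
      TensorProduct.map LinearMap.id (δ ∘ₗ LinearMap.mulLeft k a)) (hC x)
    simp only [map_sum, LinearMap.comp_apply, TensorProduct.map_tmul, LinearMap.id_apply,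
      LinearMap.mulLeft_apply, LinearEquiv.coe_coe, TensorProduct.rid_tmul] at h
    rw [h, hτ, Finset.mul_sum]
    exact Finset.sum_congr rfl fun j _ => (mul_smul_comm _ _ _).symm
  -- scalar-valued consequences for the weak counit axioms
  have hIII' : ∀ u v w : B, ∑ i ∈ T, δ (i.2 * w) * δ (u * (i.1 * v)) = δ (u * (w * v)) := by
    intro u v w
    conv_rhs => rw [← hIII w]
    rw [Finset.sum_mul, Finset.mul_sum, map_sum]
    refine Finset.sum_congr rfl fun i _ => ?_
    rw [smul_mul_assoc, mul_smul_comm, map_smul, smul_eq_mul]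
  have hI' : ∀ u v w : B, ∑ i ∈ T, δ (w * i.1) * δ (u * (i.2 * v)) = δ (u * (w * v)) := by
    intro u v w
    conv_rhs => rw [← hI w]
    rw [Finset.sum_mul, Finset.mul_sum, map_sum]
    refine Finset.sum_congr rfl fun i _ => ?_
    rw [smul_mul_assoc, mul_smul_comm, map_smul, smul_eq_mul]
  refine ⟨?_, ?_, ?_, ?_, ?_, ?_, ?_, ?_, ?_, ?_, ?_, ?_, ?_, ?_⟩
  · intro x y z; simp [LinearMap.mul_apply', mul_assoc]
  · intro x; simp [LinearMap.mul_apply']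
  · intro x; simp [LinearMap.mul_apply']
  · -- coassoc
    apply TensorProduct.ext'
    intro a b
    simp only [LinearMap.comp_apply, hΔ, map_sum, LinearMap.rTensor_tmul,
      LinearMap.lTensor_tmul, TensorProduct.sum_tmul, TensorProduct.tmul_sum,
      LinearEquiv.coe_coe, TensorProduct.assoc_tmul]
    exact Finset.sum_comm
  · -- counit_comul
    intro x
    induction x using TensorProduct.induction_on with
    | zero => rw [map_zero, map_zero, map_zero]
    | tmul a b =>
      rw [hΔ]
      simp only [map_sum, LinearMap.rTensor_tmul, hε, TensorProduct.lid_tmul,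
        MulOpposite.unop_op]
      rw [show ∑ i ∈ T, δ (a * i.1) • (i.2 ⊗ₜ[k] b)
          = (∑ i ∈ T, δ (a * i.1) • i.2) ⊗ₜ[k] b by
        rw [TensorProduct.sum_tmul]
        exact Finset.sum_congr rfl fun i _ => (TensorProduct.smul_tmul' _ _ _).symm]
      rw [hI]
    | add u v hu hv => simp only [map_add, hu, hv]
  · -- comul_counit
    intro x
    induction x using TensorProduct.induction_on with
    | zero => rw [map_zero, map_zero, map_zero]
    | tmul a b =>
      rw [hΔ]
      simp only [map_sum, LinearMap.lTensor_tmul, hε, TensorProduct.rid_tmul]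
      have h2 : ∑ i ∈ T, δ (i.2 * MulOpposite.unop b) • (MulOpposite.op i.1) = b := by
        have h3 := congrArg (MulOpposite.opLinearEquiv k (M := B)) (hIII (MulOpposite.unop b))
        simpa [map_sum] using h3
      calc ∑ i ∈ T, δ (i.2 * MulOpposite.unop b) • (a ⊗ₜ[k] MulOpposite.op i.1)
          = a ⊗ₜ[k] ∑ i ∈ T, δ (i.2 * MulOpposite.unop b) • MulOpposite.op i.1 := by
            rw [TensorProduct.tmul_sum]
            exact Finset.sum_congr rfl fun i _ => (TensorProduct.tmul_smul _ _ _).symm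
        _ = a ⊗ₜ[k] b := by rw [h2]
    | add u v hu hv => simp only [map_add, hu, hv]
  · -- comul_mul
    intro x y
    induction x using TensorProduct.induction_on with
    | zero => simp only [map_zero, LinearMap.zero_apply]
    | add u v hu hv => simp only [map_add, LinearMap.add_apply, hu, hv]
    | tmul a α =>
      induction y using TensorProduct.induction_on with
      | zero => simp only [map_zero, LinearMap.zero_apply]
      | add u v hu hv => simp only [map_add, LinearMap.add_apply, hu, hv]
      | tmul c γ =>
        rw [LinearMap.mul_apply', Algebra.TensorProduct.tmul_mul_tmul, hΔ, hΔ, hΔ]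
        simp only [map_sum, LinearMap.sum_apply, mulT_tmul, LinearMap.mul_apply',
          Algebra.TensorProduct.tmul_mul_tmul, ← MulOpposite.op_mul]
        have hfin := congrArg (TensorProduct.map
          ((TensorProduct.mk k B Bᵐᵒᵖ (a * c)) ∘ₗ (MulOpposite.opLinearEquiv k (M := B)).toLinearMap)
          ((TensorProduct.mk k B Bᵐᵒᵖ).flip (α * γ))) hKey1
        simp only [map_sum, TensorProduct.map_tmul, LinearMap.comp_apply,
          TensorProduct.mk_apply, LinearMap.flip_apply,
          MulOpposite.coe_opLinearEquiv_toLinearMap] at hfin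
        rw [← hfin, Finset.sum_comm]
  · -- weak_counit₁
    intro x y z
    induction x using TensorProduct.induction_on with
    | zero => simp only [map_zero, LinearMap.zero_apply, LinearMap.comp_zero,
        TensorProduct.map_zero_left, map_zero]
    | add u v hu hv => simp only [map_add, LinearMap.add_apply, LinearMap.comp_add,
        TensorProduct.map_add_left, hu, hv]
    | tmul a α =>
      induction z using TensorProduct.induction_on with
      | zero => simp only [map_zero, LinearMap.zero_apply, LinearMap.comp_zero,
          TensorProduct.map_zero_right, map_zero]
      | add u v hu hv => simp only [map_add, LinearMap.add_apply, LinearMap.comp_add,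
          TensorProduct.map_add_right, hu, hv]
      | tmul c γ =>
        induction y using TensorProduct.induction_on with
        | zero => simp only [map_zero, LinearMap.zero_apply]
        | add u v hu hv => simp only [map_add, LinearMap.add_apply, hu, hv]
        | tmul b β =>
          simp only [LinearMap.mul_apply', LinearMap.comp_apply, LinearMap.flip_apply, hΔ,
            map_sum, TensorProduct.map_tmul, Algebra.TensorProduct.tmul_mul_tmul, hε,
            MulOpposite.unop_mul, MulOpposite.unop_op, LinearMap.mul'_apply, mul_assoc]
          have h := hIII' (a * b) (MulOpposite.unop α)
            (c * (MulOpposite.unop γ * MulOpposite.unop β))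
          simp only [mul_assoc] at h
          rw [← h]
          exact Finset.sum_congr rfl fun i _ => mul_comm _ _
  · -- weak_counit₂
    intro x y z
    induction x using TensorProduct.induction_on with
    | zero => simp only [map_zero, LinearMap.zero_apply, LinearMap.comp_zero,
        TensorProduct.map_zero_right, map_zero]
    | add u v hu hv => simp only [map_add, LinearMap.add_apply, LinearMap.comp_add,
        TensorProduct.map_add_right, hu, hv]
    | tmul a α =>
      induction z using TensorProduct.induction_on with
      | zero => simp only [map_zero, LinearMap.zero_apply, LinearMap.comp_zero,
          TensorProduct.map_zero_left, map_zero]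
      | add u v hu hv => simp only [map_add, LinearMap.add_apply, LinearMap.comp_add,
          TensorProduct.map_add_left, hu, hv]
      | tmul c γ =>
        induction y using TensorProduct.induction_on with
        | zero => simp only [map_zero, LinearMap.zero_apply]
        | add u v hu hv => simp only [map_add, LinearMap.add_apply, hu, hv]
        | tmul b β =>
          simp only [LinearMap.mul_apply', LinearMap.comp_apply, LinearMap.flip_apply, hΔ,
            map_sum, TensorProduct.map_tmul, Algebra.TensorProduct.tmul_mul_tmul, hε,
            MulOpposite.unop_mul, MulOpposite.unop_op, LinearMap.mul'_apply, mul_assoc]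
          have h := hI' a (MulOpposite.unop β * MulOpposite.unop α)
            (b * (c * MulOpposite.unop γ))
          simp only [mul_assoc] at h
          rw [← h]
  · -- weak_unit₁
    simp only [Algebra.TensorProduct.one_def, hΔ, map_sum, TensorProduct.map_tmul,
      LinearMap.id_apply, LinearMap.flip_apply, TensorProduct.mk_apply,
      TensorProduct.tmul_sum, TensorProduct.sum_tmul, LinearMap.sum_apply,
      mulT3_tmul, mulT_tmul, LinearMap.mul_apply', LinearMap.lTensor_tmul,
      Algebra.TensorProduct.tmul_mul_tmul, one_mul, mul_one, MulOpposite.op_one]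
    exact Finset.sum_comm
  · -- weak_unit₂
    simp only [Algebra.TensorProduct.one_def, hΔ, map_sum, TensorProduct.map_tmul,
      LinearMap.id_apply, LinearMap.flip_apply, TensorProduct.mk_apply,
      TensorProduct.tmul_sum, TensorProduct.sum_tmul, LinearMap.sum_apply,
      mulT3_tmul, mulT_tmul, LinearMap.mul_apply', LinearMap.lTensor_tmul,
      Algebra.TensorProduct.tmul_mul_tmul, one_mul, mul_one, MulOpposite.op_one]
  · -- antipode₁
    intro x
    induction x using TensorProduct.induction_on with
    | zero => simp only [map_zero, LinearMap.comp_zero, TensorProduct.map_zero_left,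
        LinearMap.zero_apply]
    | add u v hu hv => simp only [map_add, LinearMap.comp_add, TensorProduct.map_add_left,
        LinearMap.add_apply, hu, hv]
    | tmul a α =>
      rw [hΔ]
      simp only [map_sum, LinearMap.lTensor_tmul, hS, m2_tmul, LinearMap.mul_apply',
        Algebra.TensorProduct.tmul_mul_tmul, ← MulOpposite.op_mul]
      rw [← TensorProduct.tmul_sum,
        show ∑ i ∈ T, MulOpposite.op (nakayama k B s δ i.2 * i.1) = (1 : Bᵐᵒᵖ) from
          ((Finset.op_sum _ _).symm.trans (by rw [hKey2, MulOpposite.op_one]))]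
      simp only [Algebra.TensorProduct.one_def, hΔ, map_sum, TensorProduct.map_tmul,
        LinearMap.comp_apply, LinearMap.flip_apply, LinearMap.mul_apply',
        Algebra.TensorProduct.tmul_mul_tmul, hε, MulOpposite.unop_mul, MulOpposite.unop_op,
        TensorProduct.lid_tmul, LinearMap.id_apply, one_mul]
      have h := hI (a * MulOpposite.unop α)
      simp only [mul_assoc] at h
      rw [show ∑ i ∈ T, δ (a * (MulOpposite.unop α * i.1)) • (i.2 ⊗ₜ[k] (1 : Bᵐᵒᵖ))
          = (∑ i ∈ T, δ (a * (MulOpposite.unop α * i.1)) • i.2) ⊗ₜ[k] (1 : Bᵐᵒᵖ) by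
        rw [TensorProduct.sum_tmul]
        exact Finset.sum_congr rfl fun i _ => (TensorProduct.smul_tmul' _ _ _).symm, h]
  · -- antipode₂
    intro x
    induction x using TensorProduct.induction_on with
    | zero => simp only [map_zero, LinearMap.comp_zero, TensorProduct.map_zero_right,
        LinearMap.zero_apply]
    | add u v hu hv => simp only [map_add, LinearMap.comp_add, TensorProduct.map_add_right,
        LinearMap.add_apply, hu, hv]
    | tmul a α =>
      rw [hΔ]
      simp only [map_sum, LinearMap.rTensor_tmul, hS, MulOpposite.unop_op, m2_tmul,
        LinearMap.mul_apply', Algebra.TensorProduct.tmul_mul_tmul]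
      rw [← TensorProduct.sum_tmul, hM,
        show MulOpposite.op (nakayama k B s δ a) * α
            = MulOpposite.op (MulOpposite.unop α * nakayama k B s δ a) by
          rw [MulOpposite.op_mul, MulOpposite.op_unop]]
      simp only [Algebra.TensorProduct.one_def, hΔ, map_sum, TensorProduct.map_tmul,
        LinearMap.comp_apply, LinearMap.mul_apply', Algebra.TensorProduct.tmul_mul_tmul,
        hε, TensorProduct.rid_tmul, LinearMap.id_apply, mul_one]
      rw [show ∑ i ∈ T, δ (a * i.2 * MulOpposite.unop α) • ((1:B) ⊗ₜ[k] MulOpposite.op i.1)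
          = (1:B) ⊗ₜ[k] MulOpposite.op (MulOpposite.unop α * nakayama k B s δ a) by
        rw [← hKey3 a (MulOpposite.unop α), Finset.op_sum, TensorProduct.tmul_sum]
        refine Finset.sum_congr rfl fun i _ => ?_
        rw [MulOpposite.op_smul, TensorProduct.tmul_smul, mul_assoc]]
  · -- antipode₃
    intro x
    induction x using TensorProduct.induction_on with
    | zero => simp only [map_zero]
    | add u v hu hv => simp only [map_add, hu, hv]
    | tmul a α =>
      rw [hΔ]
      simp only [map_sum, LinearMap.lTensor_tmul, hΔ, TensorProduct.tmul_sum,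
        TensorProduct.map_tmul, LinearMap.comp_apply, hS, m2_tmul, LinearMap.mul_apply',
        Algebra.TensorProduct.tmul_mul_tmul, MulOpposite.unop_op, ← MulOpposite.op_mul]
      have e2 : ∑ i ∈ T, i.1 * (i.2 * MulOpposite.unop α) = MulOpposite.unop α := by
        rw [show ∑ i ∈ T, i.1 * (i.2 * MulOpposite.unop α)
            = (∑ i ∈ T, i.1 * i.2) * MulOpposite.unop α by
          rw [Finset.sum_mul]
          exact Finset.sum_congr rfl fun i _ => (mul_assoc _ _ _).symm]
        rw [hM, one_mul]
      have e3 : ∑ j ∈ T, MulOpposite.op (nakayama k B s δ j.2 * j.1 * nakayama k B s δ a)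
          = MulOpposite.op (nakayama k B s δ a) := by
        refine (Finset.op_sum _ _).symm.trans ?_
        rw [← Finset.sum_mul, hKey2, one_mul]
      simp only [← TensorProduct.tmul_sum]
      rw [← TensorProduct.sum_tmul, e2, e3]

end
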